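/- If X and Y are quasi-isometric geodesic metric spaces and X is δ-hyperbolic for some δ, then Y is δ'-hyperbolic for some δ' (depending only on δ and the quasi-isometry constants). -/

import Mathlib

set_option maxHeartbeats 1000000


/-- `f` is a (K,C)-quasi-isometric embedding. -/
def QIEmb {X Y : Type*} [MetricSpace X] [MetricSpace Y] (K C : ℝ) (f : X → Y) : Prop :=
  ∀ x z : X, (1/K) * dist x z - C ≤ dist (f x) (f z) ∧ dist (f x) (f z) ≤ K * dist x z + C

/-- `f` is a (K,C)-quasi-isometry: a quasi-isometric embedding with C-dense image. -/
def QI {X Y : Type*} [MetricSpace X] [MetricSpace Y] (K C : ℝ) (f : X → Y) : Prop :=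
  QIEmb K C f ∧ ∀ y : Y, ∃ x : X, dist y (f x) ≤ C

/-- `γ` restricted to the parameter set `s` is an isometric (geodesic) parametrization. -/
def IsGeodesicOn {X : Type*} [MetricSpace X] (γ : ℝ → X) (s : Set ℝ) : Prop :=
  ∀ a ∈ s, ∀ b ∈ s, dist (γ a) (γ b) = |a - b|

/-- `γ` is a geodesic from `x` to `y`, parametrized by `[0, dist x y]`. -/
def GeodesicFrom {X : Type*} [MetricSpace X] (γ : ℝ → X) (x y : X) : Prop :=
  IsGeodesicOn γ (Set.Icc 0 (dist x y)) ∧ γ 0 = x ∧ γ (dist x y) = y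

/-- A geodesic metric space: any two points are joined by a geodesic. -/
def GeodesicSpace (X : Type*) [MetricSpace X] : Prop :=
  ∀ x y : X, ∃ γ : ℝ → X, GeodesicFrom γ x y

/-- A geodesic triangle: three vertices together with geodesic sides joining them. -/
structure GeoTriangle (X : Type*) [MetricSpace X] where
  a : X
  b : X
  c : X
  s1 : ℝ → X
  s2 : ℝ → X
  s3 : ℝ → X
  h1 : GeodesicFrom s1 a b
  h2 : GeodesicFrom s2 b c
  h3 : GeodesicFrom s3 c a

/-- The i-th side of a geodesic triangle, as a subset of `X`. -/
def GeoTriangle.side {X : Type*} [MetricSpace X] (T : GeoTriangle X) : Fin 3 → Set X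
  | 0 => T.s1 '' Set.Icc 0 (dist T.a T.b)
  | 1 => T.s2 '' Set.Icc 0 (dist T.b T.c)
  | 2 => T.s3 '' Set.Icc 0 (dist T.c T.a)

/-- A triangle is δ-thin if each side lies in the closed δ-neighborhood of the
union of the other two sides. -/
def IsThin {X : Type*} [MetricSpace X] (δ : ℝ) (T : GeoTriangle X) : Prop :=
  ∀ i : Fin 3, ∀ p ∈ T.side i, ∃ q ∈ T.side (i + 1) ∪ T.side (i + 2), dist p q ≤ δ

/-- `X` is δ-hyperbolic: every geodesic triangle is δ-thin. -/
def Hyperbolic (X : Type*) [MetricSpace X] (δ : ℝ) : Prop :=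
  ∀ T : GeoTriangle X, IsThin δ T


open Set

lemma geodesic_reverse {X : Type*} [MetricSpace X] {γ : ℝ → X} {x y : X}
    (h : GeodesicFrom γ x y) : GeodesicFrom (fun t => γ (dist x y - t)) y x := by
  obtain ⟨hiso, h0, h1⟩ := h
  refine ⟨?_, ?_, ?_⟩
  · intro a ha b hb
    rw [dist_comm y x] at ha hb
    have ha' : dist x y - a ∈ Icc 0 (dist x y) := ⟨by linarith [ha.2], by linarith [ha.1]⟩
    have hb' : dist x y - b ∈ Icc 0 (dist x y) := ⟨by linarith [hb.2], by linarith [hb.1]⟩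
    rw [hiso _ ha' _ hb', abs_sub_comm]
    ring_nf
  · simpa using h1
  · rw [dist_comm y x]; simpa using h0

/-- The "log lemma": a point on a geodesic joining the endpoints of a chain of
`2^n + 1` points with gaps at most `G` is within `n*δ + G` of some chain point. -/
lemma log_lemma {X : Type*} [MetricSpace X] (hX : GeodesicSpace X) {δ : ℝ}
    (hyp : Hyperbolic X δ) (hδ : 0 ≤ δ) :
    ∀ (n : ℕ) (c : ℕ → X) (G : ℝ), (∀ i < 2^n, dist (c i) (c (i+1)) ≤ G) →
    ∀ (σ : ℝ → X), GeodesicFrom σ (c 0) (c (2^n)) →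
    ∀ s ∈ Icc 0 (dist (c 0) (c (2^n))),
    ∃ i ≤ 2^n, dist (σ s) (c i) ≤ n * δ + G := by
  intro n
  induction n with
  | zero =>
    intro c G hG σ hσ s hs
    refine ⟨0, by norm_num, ?_⟩
    have h2 := hσ.1 s hs 0 ⟨le_refl 0, dist_nonneg⟩
    rw [hσ.2.1] at h2
    have h0 : dist (σ s) (c 0) = s := by
      rw [h2, abs_of_nonneg (by linarith [hs.1])]; ring
    rw [h0]
    have hg := hG 0 (by norm_num)
    have hs2 := hs.2
    have hpow : (2:ℕ)^0 = 0 + 1 := rfl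
    rw [hpow] at hs2
    push_cast
    linarith
  | succ n ih =>
    intro c G hG σ hσ s hs
    set N := 2^(n+1) with hN
    have hNn : 2^n + 2^n = N := by rw [hN]; ring
    obtain ⟨σ1, hσ1⟩ := hX (c 0) (c (2^n))
    obtain ⟨σ2, hσ2⟩ := hX (c (2^n)) (c N)
    set T : GeoTriangle X := ⟨c 0, c (2^n), c N, σ1, σ2, fun t => σ (dist (c 0) (c N) - t),
      hσ1, hσ2, geodesic_reverse hσ⟩ with hT
    have hside0 : T.side 0 = σ1 '' Icc 0 (dist (c 0) (c (2^n))) := rfl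
    have hside1 : T.side 1 = σ2 '' Icc 0 (dist (c (2^n)) (c N)) := rfl
    have hside2 : T.side 2 = (fun t => σ (dist (c 0) (c N) - t)) '' Icc 0 (dist (c N) (c 0)) := rfl
    have hpmem : σ s ∈ T.side 2 := by
      rw [hside2]
      refine ⟨dist (c 0) (c N) - s, ?_, ?_⟩
      · rw [dist_comm (c N) (c 0)]
        exact ⟨by linarith [hs.2], by linarith [hs.1]⟩
      · show σ (dist (c 0) (c N) - (dist (c 0) (c N) - s)) = σ s
        ring_nf
    obtain ⟨q', hq'mem, hq'd⟩ := hyp T 2 (σ s) hpmem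
    have e1 : (2+1 : Fin 3) = 0 := rfl
    have e2 : (2+2 : Fin 3) = 1 := rfl
    rw [e1, e2, hside0, hside1] at hq'mem
    cases hq'mem with
    | inl h =>
      obtain ⟨s', hs', hq'⟩ := h
      obtain ⟨i, hi, hdi⟩ := ih c G (fun i hi => hG i (by omega)) σ1 hσ1 s' hs'
      refine ⟨i, by omega, ?_⟩
      have htri : dist (σ s) (c i) ≤ dist (σ s) q' + dist q' (c i) := dist_triangle _ _ _
      rw [← hq'] at htri hq'd
      push_cast
      push_cast at hdi
      linarith
    | inr h =>
      obtain ⟨s', hs', hq'⟩ := h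
      have hc' : GeodesicFrom σ2 ((fun i => c (2^n + i)) 0) ((fun i => c (2^n + i)) (2^n)) := by
        show GeodesicFrom σ2 (c (2^n + 0)) (c (2^n + 2^n))
        rw [hNn]
        exact hσ2
      have hs'' : s' ∈ Icc 0 (dist ((fun i => c (2^n + i)) 0) ((fun i => c (2^n + i)) (2^n))) := by
        show s' ∈ Icc 0 (dist (c (2^n + 0)) (c (2^n + 2^n)))
        rw [hNn]
        exact hs'
      obtain ⟨i, hi, hdi⟩ := ih (fun i => c (2^n + i)) G
        (fun i hi => by
          show dist (c (2^n + i)) (c (2^n + (i+1))) ≤ G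
          have : 2^n + (i+1) = (2^n + i) + 1 := rfl
          rw [this]
          exact hG (2^n + i) (by omega)) σ2 hc' s' hs''
      refine ⟨2^n + i, by omega, ?_⟩
      have htri : dist (σ s) (c (2^n + i)) ≤ dist (σ s) q' + dist q' (c (2^n + i)) :=
        dist_triangle _ _ _
      rw [← hq'] at htri hq'd
      push_cast
      push_cast at hdi
      linarith

/-- Chain points are within `G * (j - i)` of each other. -/
lemma chain_dist {X : Type*} [MetricSpace X] (c : ℕ → X) (G : ℝ) (N : ℕ)
    (hG : ∀ i < N, dist (c i) (c (i+1)) ≤ G) :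
    ∀ j ≤ N, ∀ i ≤ j, dist (c i) (c j) ≤ G * (j - i) := by
  intro j
  induction j with
  | zero => intro _ i hi; interval_cases i; simp
  | succ j ih =>
    intro hjN i hi
    rcases Nat.lt_or_ge i (j+1) with h | h
    · have hij : i ≤ j := by omega
      have h1 := ih (by omega) i hij
      have h2 := hG j (by omega)
      calc dist (c i) (c (j+1)) ≤ dist (c i) (c j) + dist (c j) (c (j+1)) := dist_triangle _ _ _
        _ ≤ G * (j - i) + G := by linarith
        _ = G * ((j+1 : ℕ) - i) := by push_cast; ring
    · have : i = j + 1 := by omega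
      subst this
      simp

lemma pow_two_ge_sq : ∀ k : ℕ, (k:ℝ)^2 ≤ 2 * 2^k := by
  intro k
  induction k with
  | zero => norm_num
  | succ k ih =>
    have hk : (k:ℝ) + 1 ≤ 2^k := by
      have h := Nat.lt_two_pow_self (n := k)
      have h' : k + 1 ≤ 2^k := h
      exact_mod_cast h'
    push_cast
    nlinarith [ih, hk, (by ring : (2:ℝ)^(k+1) = 2*2^k)]

lemma quad_bound (A B : ℝ) (hA : 0 ≤ A) (hB : 0 ≤ B) (k : ℕ)
    (h : (k:ℝ)^2 ≤ 2*A*k + 2*B) : (k:ℝ) ≤ 2*A + B + 1 := by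
  nlinarith [sq_nonneg ((k:ℝ) - 2*A), Nat.cast_nonneg (α := ℝ) k]

/-- A connector chain with unit steps from `p` to `q`, staying `D`-far from `m`. -/
lemma connector {X : Type*} [MetricSpace X] (hX : GeodesicSpace X) (m p q : X) (D : ℝ)
    (hD : 0 ≤ D)
    (hyp : (2*D ≤ dist m p ∧ dist p q ≤ D) ∨ (p = q ∧ D ≤ dist m p)) :
    ∃ e : ℕ → X, e 0 = p ∧ (∀ j, dist (e j) (e (j+1)) ≤ 1) ∧
      (∀ j : ℕ, D + 1 ≤ (j:ℝ) → e j = q) ∧ (∀ j, D ≤ dist m (e j)) := by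
  obtain ⟨τ, hτiso, hτ0, hτ1⟩ := hX p q
  set L := dist p q with hL
  have hL0 : 0 ≤ L := dist_nonneg
  refine ⟨fun j => τ (min (j:ℝ) L), ?_, ?_, ?_, ?_⟩
  · simp [min_eq_left hL0, hτ0]
  · intro j
    have hm1 : min (j:ℝ) L ∈ Icc 0 L := ⟨le_min (by positivity) hL0, min_le_right _ _⟩
    have hm2 : min ((j:ℝ)+1) L ∈ Icc 0 L := ⟨le_min (by positivity) hL0, min_le_right _ _⟩
    have heq := hτiso _ hm1 _ hm2
    have hmono : min (j:ℝ) L ≤ min ((j:ℝ)+1) L := min_le_min (by linarith) le_rfl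
    have h1 : min ((j:ℝ)+1) L ≤ min (j:ℝ) L + 1 := by
      rcases le_total ((j:ℝ)+1) L with h | h
      · rw [min_eq_left h, min_eq_left (by linarith)]
      · rw [min_eq_right h]
        rcases le_total (j:ℝ) L with h' | h'
        · rw [min_eq_left h']; linarith
        · rw [min_eq_right h']; linarith
    push_cast
    rw [heq, abs_le]
    constructor <;> linarith
  · intro j hj
    have hLD : L ≤ D := by
      rcases hyp with ⟨_, h⟩ | ⟨h, _⟩
      · exact h
      · rw [hL, h]; simpa using hD
    have hm : min (j:ℝ) L = L := min_eq_right (by linarith)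
    show τ (min (j:ℝ) L) = q
    rw [hm, hτ1]
  · intro j
    have hmem : min (j:ℝ) L ∈ Icc 0 L := ⟨le_min (by positivity) hL0, min_le_right _ _⟩
    have hdp : dist p (τ (min (j:ℝ) L)) = min (j:ℝ) L := by
      have := hτiso 0 ⟨le_refl 0, hL0⟩ _ hmem
      rw [hτ0] at this
      rw [this, abs_of_nonpos (by linarith [hmem.1])]
      ring
    have htri : dist m p ≤ dist m (τ (min (j:ℝ) L)) + dist p (τ (min (j:ℝ) L)) := by
      rw [dist_comm p]
      exact dist_triangle _ _ _
    rcases hyp with ⟨h1, h2⟩ | ⟨h1, h2⟩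
    · have : min (j:ℝ) L ≤ L := min_le_right _ _
      rw [hdp] at htri
      linarith
    · have hLz : L = 0 := by rw [hL, h1, dist_self]
      have : min (j:ℝ) L ≤ 0 := by rw [hLz]; exact min_le_right _ _
      rw [hdp] at htri
      linarith

lemma morse_a (δ K' C' G : ℝ) (hδ : 0 ≤ δ) (hK' : 0 ≤ K') (hC' : 0 ≤ C') (hG : 1 ≤ G) :
    ∃ Da : ℝ, 0 ≤ Da ∧ ∀ (X : Type) [MetricSpace X], GeodesicSpace X → Hyperbolic X δ →
      ∀ (c : ℕ → X) (N : ℕ) (σ : ℝ → X),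
      (∀ i < N, dist (c i) (c (i+1)) ≤ G) →
      (∀ i ≤ N, ∀ j ≤ N, |(i:ℝ) - (j:ℝ)| ≤ K' * dist (c i) (c j) + C') →
      GeodesicFrom σ (c 0) (c N) →
      ∀ s ∈ Icc 0 (dist (c 0) (c N)), ∃ i ≤ N, dist (σ s) (c i) ≤ Da := by
  set α : ℝ := 12*K' + 4 with hα
  set β : ℝ := 2*C' + 12 with hβ
  set A : ℝ := α * δ with hA
  set B : ℝ := α * G + β with hB
  set K₀ : ℝ := 2*A + B + 1 with hK₀
  set Da : ℝ := K₀ * δ + G with hDa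
  have hα0 : 0 ≤ α := by rw [hα]; linarith
  have hβ0 : 0 ≤ β := by rw [hβ]; linarith
  have hA0 : 0 ≤ A := mul_nonneg hα0 hδ
  have hB0 : 0 ≤ B := by rw [hB]; nlinarith
  have hK₀0 : 0 ≤ K₀ := by rw [hK₀]; linarith
  have hDa0 : 0 ≤ Da := by rw [hDa]; nlinarith
  refine ⟨Da, hDa0, ?_⟩
  intro X _ hX hyp c N σ hgap hlow hσ
  set L := dist (c 0) (c N) with hLdef
  have hL0 : 0 ≤ L := dist_nonneg
  set S : Set X := c '' (Set.Iic N) with hS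
  have hSne : S.Nonempty := ⟨c 0, 0, Nat.zero_le N, rfl⟩
  have hSfin : S.Finite := (Set.finite_Iic N).image c
  have hScomp : IsCompact S := hSfin.isCompact
  have hσcont : ContinuousOn σ (Icc 0 L) := by
    apply LipschitzOnWith.continuousOn (K := 1)
    apply LipschitzOnWith.of_dist_le_mul
    intro a ha b hb
    rw [hσ.1 a ha b hb, Real.dist_eq]
    simp
  have hFcont : ContinuousOn (fun s => Metric.infDist (σ s) S) (Icc 0 L) :=
    (Metric.continuous_infDist_pt S).comp_continuousOn hσcont
  obtain ⟨s₀, hs₀mem, hs₀max⟩ :=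
    isCompact_Icc.exists_isMaxOn ⟨0, left_mem_Icc.2 hL0⟩ hFcont
  set D := Metric.infDist (σ s₀) S with hDdef
  have hD0 : 0 ≤ D := Metric.infDist_nonneg
  have hDmax : ∀ s ∈ Icc 0 L, Metric.infDist (σ s) S ≤ D := fun s hs => hs₀max hs
  have hattain : ∀ s ∈ Icc 0 L, ∃ i ≤ N, dist (σ s) (c i) ≤ D := by
    intro s hs
    obtain ⟨y, hyS, hy⟩ := hScomp.exists_infDist_eq_dist hSne (σ s)
    obtain ⟨i, hiN, rfl⟩ := hyS
    exact ⟨i, hiN, by rw [← hy]; exact hDmax s hs⟩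
  have hchainD : ∀ i ≤ N, D ≤ dist (σ s₀) (c i) := by
    intro i hi
    exact Metric.infDist_le_dist_of_mem ⟨i, hi, rfl⟩
  -- it suffices to show D ≤ Da
  suffices hDDa : D ≤ Da by
    intro s hs
    obtain ⟨i, hiN, hid⟩ := hattain s hs
    exact ⟨i, hiN, hid.trans hDDa⟩
  -- left anchor
  set sm := max 0 (s₀ - 2*D) with hsmdef
  have hsmmem : sm ∈ Icc 0 L := ⟨le_max_left _ _, max_le hL0 (by linarith [hs₀mem.2])⟩
  have hsmle : sm ≤ s₀ := max_le hs₀mem.1 (by linarith)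
  have hgapm : s₀ - sm ≤ 2*D := by
    have := le_max_right 0 (s₀ - 2*D); linarith
  obtain ⟨im, himN, hancm, hconm⟩ : ∃ i ≤ N, dist (σ sm) (c i) ≤ D ∧
      ((2*D ≤ dist (σ s₀) (σ sm) ∧ dist (σ sm) (c i) ≤ D) ∨
        (σ sm = c i ∧ D ≤ dist (σ s₀) (σ sm))) := by
    by_cases hcase : 0 ≤ s₀ - 2*D
    · have heq : sm = s₀ - 2*D := max_eq_right hcase
      obtain ⟨i, hiN, hid⟩ := hattain sm hsmmem
      have hdm : dist (σ s₀) (σ sm) = 2*D := by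
        rw [hσ.1 s₀ hs₀mem sm hsmmem, heq, abs_of_nonneg (by linarith)]; ring
      exact ⟨i, hiN, hid, Or.inl ⟨hdm.ge, hid⟩⟩
    · have hsm0 : sm = 0 := max_eq_left (by linarith)
      have he : σ sm = c 0 := by rw [hsm0, hσ.2.1]
      refine ⟨0, Nat.zero_le N, ?_, Or.inr ⟨he, ?_⟩⟩
      · rw [he]; simp [hD0]
      · rw [he]; exact hchainD 0 (Nat.zero_le N)
  -- right anchor
  set sp := min L (s₀ + 2*D) with hspdef
  have hspmem : sp ∈ Icc 0 L := ⟨le_min hL0 (by linarith [hs₀mem.1]), min_le_left _ _⟩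
  have hspge : s₀ ≤ sp := le_min hs₀mem.2 (by linarith)
  have hgapp : sp - s₀ ≤ 2*D := by
    have := min_le_right L (s₀ + 2*D); linarith
  obtain ⟨ip, hipN, hancp, hconp⟩ : ∃ i ≤ N, dist (σ sp) (c i) ≤ D ∧
      ((2*D ≤ dist (σ s₀) (σ sp) ∧ dist (σ sp) (c i) ≤ D) ∨
        (σ sp = c i ∧ D ≤ dist (σ s₀) (σ sp))) := by
    by_cases hcase : s₀ + 2*D ≤ L
    · have heq : sp = s₀ + 2*D := min_eq_right hcase
      obtain ⟨i, hiN, hid⟩ := hattain sp hspmem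
      have hdm : dist (σ s₀) (σ sp) = 2*D := by
        rw [hσ.1 s₀ hs₀mem sp hspmem, heq, abs_of_nonpos (by linarith)]; ring
      exact ⟨i, hiN, hid, Or.inl ⟨hdm.ge, hid⟩⟩
    · have hspL : sp = L := min_eq_left (by linarith)
      have he : σ sp = c N := by rw [hspL]; exact hσ.2.2
      refine ⟨N, le_refl N, ?_, Or.inr ⟨he, ?_⟩⟩
      · rw [he]; simp [hD0]
      · rw [he]; exact hchainD N (le_refl N)
  obtain ⟨e, he0, hegap, hesat, hefar⟩ := connector hX (σ s₀) (σ sm) (c im) D hD0 hconm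
  obtain ⟨r, hr0, hrgap, hrsat, hrfar⟩ := connector hX (σ s₀) (σ sp) (c ip) D hD0 hconp
  set P : ℕ := ⌈D⌉₊ + 1 with hPdef
  have hP1 : 1 ≤ P := by omega
  have hPD : D + 1 ≤ (P:ℝ) := by
    have := Nat.le_ceil D; rw [hPdef]; push_cast; linarith
  have hPD2 : (P:ℝ) ≤ D + 2 := by
    have := Nat.ceil_lt_add_one hD0; rw [hPdef]; push_cast; linarith
  have heP : ∀ j, P ≤ j → e j = c im := by
    intro j hj
    apply hesat
    have h : (P:ℝ) ≤ (j:ℝ) := by exact_mod_cast hj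
    linarith
  have hrP : ∀ j, P ≤ j → r j = c ip := by
    intro j hj
    apply hrsat
    have h : (P:ℝ) ≤ (j:ℝ) := by exact_mod_cast hj
    linarith
  -- bound on |ip - im|
  have hmmdist : dist (σ sm) (σ sp) = sp - sm := by
    rw [hσ.1 sm hsmmem sp hspmem, abs_of_nonpos (by linarith)]; ring
  have hcc : dist (c im) (c ip) ≤ 6*D := by
    have h1 : dist (c im) (c ip) ≤ dist (c im) (σ sm) + dist (σ sm) (σ sp) + dist (σ sp) (c ip) :=
      dist_triangle4 _ _ _ _
    have h0 : dist (c im) (σ sm) = dist (σ sm) (c im) := dist_comm _ _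
    have h2 : dist (σ sm) (σ sp) ≤ 4*D := by rw [hmmdist]; linarith
    linarith
  have hii : |(im:ℝ) - (ip:ℝ)| ≤ 6*K'*D + C' := by
    have := hlow im himN ip hipN
    nlinarith [dist_nonneg (x := c im) (y := c ip)]
  set Q : ℕ := ⌈6*K'*D + C'⌉₊ + 1 with hQdef
  have hQ1 : 1 ≤ Q := by omega
  have hQD : (Q:ℝ) ≤ 6*K'*D + C' + 2 := by
    have h60 : (0:ℝ) ≤ 6*K'*D + C' := by nlinarith [mul_nonneg hK' hD0]
    have := Nat.ceil_lt_add_one h60; rw [hQdef]; push_cast; linarith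
  have hQdiff1 : ip - im ≤ Q := by
    have h1 : (ip:ℝ) - im ≤ 6*K'*D + C' := by
      have := abs_le.1 hii; linarith [this.1]
    have h2 : 6*K'*D + C' ≤ (⌈6*K'*D + C'⌉₊ : ℝ) := Nat.le_ceil _
    have : ((ip - im : ℕ) : ℝ) ≤ (Q : ℝ) := by
      rcases Nat.le_total ip im with h | h
      · have : ip - im = 0 := by omega
        rw [this]; simp
      · rw [Nat.cast_sub h, hQdef]; push_cast; linarith
    exact_mod_cast this
  have hQdiff2 : im - ip ≤ Q := by
    have h1 : (im:ℝ) - ip ≤ 6*K'*D + C' := (abs_le.1 hii).2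
    have h2 : 6*K'*D + C' ≤ (⌈6*K'*D + C'⌉₊ : ℝ) := Nat.le_ceil _
    have : ((im - ip : ℕ) : ℝ) ≤ (Q : ℝ) := by
      rcases Nat.le_total im ip with h | h
      · have : im - ip = 0 := by omega
        rw [this]; simp
      · rw [Nat.cast_sub h, hQdef]; push_cast; linarith
    exact_mod_cast this
  -- middle chain
  set imid : ℕ → ℕ := fun j => if im ≤ ip then min (im + j) ip else im - min j (im - ip)
    with himid
  have hmid0 : imid 0 = im := by rw [himid]; dsimp only; split_ifs <;> omega
  have hmidQ : ∀ j, Q ≤ j → imid j = ip := by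
    intro j hj; rw [himid]; dsimp only; split_ifs <;> omega
  have hmidle : ∀ j, imid j ≤ N := by
    intro j; rw [himid]; dsimp only; split_ifs <;> omega
  have hstep : ∀ a b : ℕ, (a = b ∨ (b = a + 1 ∧ a < N) ∨ (a = b + 1 ∧ b < N)) →
      dist (c a) (c b) ≤ G := by
    rintro a b (rfl | ⟨rfl, h⟩ | ⟨rfl, h⟩)
    · simp; linarith
    · exact hgap a h
    · rw [dist_comm]; exact hgap b h
  have hmidgap : ∀ j, dist (c (imid j)) (c (imid (j+1))) ≤ G := by
    intro j
    apply hstep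
    rw [himid]; dsimp only; split_ifs <;> omega
  -- the big chain
  set bigc : ℕ → X := fun j =>
    if j ≤ P then e j else if j ≤ P + Q then c (imid (j - P)) else r (P - min (j - P - Q) P)
    with hbigc
  have hb0 : bigc 0 = σ sm := by rw [hbigc]; simp [he0]
  have hbend : ∀ j, 2*P + Q ≤ j → bigc j = σ sp := by
    intro j hj
    rw [hbigc]; dsimp only
    rw [if_neg (by omega), if_neg (by omega)]
    have : P - min (j - P - Q) P = 0 := by omega
    rw [this, hr0]
  have hbe : ∀ j, j ≤ P → bigc j = e j := by
    intro j hj; rw [hbigc]; dsimp only; rw [if_pos hj]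
  have hbm : ∀ j, P ≤ j → j ≤ P + Q → bigc j = c (imid (j - P)) := by
    intro j hj1 hj2
    rcases Nat.eq_or_lt_of_le hj1 with rfl | h
    · rw [hbe P (le_refl P), heP P (le_refl P)]
      have h0 : P - P = 0 := by omega
      rw [h0, hmid0]
    · rw [hbigc]; dsimp only; rw [if_neg (by omega), if_pos hj2]
  have hbr : ∀ j, P + Q ≤ j → bigc j = r (P - min (j - P - Q) P) := by
    intro j hj
    rcases Nat.eq_or_lt_of_le hj with rfl | h
    · have h2 : P - min (P + Q - P - Q) P = P := by omega
      rw [h2, hrP P (le_refl P), hbm (P + Q) (by omega) (le_refl _)]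
      have h1 : P + Q - P = Q := by omega
      rw [h1, hmidQ Q (le_refl Q)]
    · rw [hbigc]; dsimp only; rw [if_neg (by omega), if_neg (by omega)]
  have hbfar : ∀ j, D ≤ dist (σ s₀) (bigc j) := by
    intro j
    rw [hbigc]; dsimp only
    split_ifs with h1 h2
    · exact hefar j
    · exact hchainD _ (hmidle _)
    · exact hrfar _
  have hbgap : ∀ j, dist (bigc j) (bigc (j+1)) ≤ G := by
    intro j
    rcases Nat.lt_or_ge (j+1) P with h | h
    · rw [hbe j (by omega), hbe (j+1) (by omega)]
      exact (hegap j).trans hG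
    rcases Nat.lt_or_ge j (P + Q) with h' | h'
    · have hjP : P ≤ j ∨ j + 1 = P := by omega
      rcases hjP with hjP | hjP
      · rw [hbm j hjP (by omega), hbm (j+1) (by omega) (by omega)]
        have : j + 1 - P = (j - P) + 1 := by omega
        rw [this]
        exact hmidgap (j - P)
      · rw [hbe j (by omega), hbe (j+1) (by omega)]
        exact (hegap j).trans hG
    · rw [hbr j h', hbr (j+1) (by omega)]
      rcases (show P - min (j + 1 - P - Q) P = P - min (j - P - Q) P ∨
          P - min (j - P - Q) P = (P - min (j + 1 - P - Q) P) + 1 by omega) with h | h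
      · rw [h]; simp; linarith
      · rw [h, dist_comm]
        exact (hrgap _).trans hG
  -- apply log lemma
  set k : ℕ := Nat.log 2 (2*P + Q) + 1 with hkdef
  have hk1 : 2*P + Q < 2^k := Nat.lt_pow_succ_log_self (by norm_num) _
  have hk2 : 2^k ≤ 2*(2*P + Q) := by
    have h1 := Nat.pow_log_le_self 2 (show 2*P+Q ≠ 0 by omega)
    have h3 : 2^k = 2^(Nat.log 2 (2*P+Q)) * 2 := by rw [hkdef, pow_succ]
    omega
  have hτ : GeodesicFrom (fun t => σ (sm + t)) (bigc 0) (bigc (2^k)) := by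
    rw [hb0, hbend (2^k) (by omega)]
    refine ⟨?_, ?_, ?_⟩
    · intro a ha b hb
      rw [hmmdist] at ha hb
      have hamem : sm + a ∈ Icc 0 L :=
        ⟨by linarith [ha.1, hsmmem.1], by linarith [ha.2, hspmem.2]⟩
      have hbmem : sm + b ∈ Icc 0 L :=
        ⟨by linarith [hb.1, hsmmem.1], by linarith [hb.2, hspmem.2]⟩
      rw [hσ.1 _ hamem _ hbmem]
      ring_nf
    · show σ (sm + 0) = σ sm
      norm_num
    · show σ (sm + dist (σ sm) (σ sp)) = σ sp
      rw [hmmdist]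
      congr 1
      ring
  have hs₀' : s₀ - sm ∈ Icc 0 (dist (bigc 0) (bigc (2^k))) := by
    rw [hb0, hbend (2^k) (by omega), hmmdist]
    exact ⟨by linarith, by linarith⟩
  obtain ⟨i, hik, hid⟩ := log_lemma hX hyp hδ k bigc G (fun i _ => hbgap i)
    (fun t => σ (sm + t)) hτ (s₀ - sm) hs₀'
  have hpt : σ (sm + (s₀ - sm)) = σ s₀ := by congr 1; ring
  rw [hpt] at hid
  have hDk : D ≤ k * δ + G := (hbfar i).trans hid
  -- numerics
  have hkcast : ((2:ℕ)^k : ℝ) ≤ 2*(2*P + Q) := by exact_mod_cast hk2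
  have h2k : ((2:ℝ))^k ≤ α * D + β := by
    push_cast at hkcast
    have hceil1 : (⌈D⌉₊:ℝ) < D + 1 := Nat.ceil_lt_add_one hD0
    have h60 : (0:ℝ) ≤ 6*K'*D + C' := by nlinarith [mul_nonneg hK' hD0]
    have hceil2 : (⌈6*K'*D + C'⌉₊:ℝ) < 6*K'*D + C' + 1 := Nat.ceil_lt_add_one h60
    rw [hα, hβ]
    linarith
  have hsq : (k:ℝ)^2 ≤ 2*A*k + 2*B := by
    have h1 := pow_two_ge_sq k
    have h2 : ((2:ℝ))^k ≤ α * (k*δ + G) + β := by nlinarith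
    rw [hA, hB]
    nlinarith [Nat.cast_nonneg (α := ℝ) k]
  have hkK₀ : (k:ℝ) ≤ K₀ := by
    rw [hK₀]; exact quad_bound A B hA0 hB0 k hsq
  rw [hDa]
  nlinarith

lemma flip_lemma (P : ℕ → Prop) (T : ℕ) (h0 : P 0) (h1 : ¬ P (T+1)) :
    ∃ t ≤ T, P t ∧ ¬ P (t+1) := by
  induction T with
  | zero => exact ⟨0, le_refl 0, h0, h1⟩
  | succ T ih =>
    by_cases h : P (T+1)
    · exact ⟨T+1, le_refl _, h, h1⟩
    · obtain ⟨t, ht, hp⟩ := ih h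
      exact ⟨t, by omega, hp⟩

lemma morse_b (δ K' C' G : ℝ) (hδ : 0 ≤ δ) (hK' : 0 ≤ K') (hC' : 0 ≤ C') (hG : 1 ≤ G) :
    ∃ Db : ℝ, 0 ≤ Db ∧ ∀ (X : Type) [MetricSpace X], GeodesicSpace X → Hyperbolic X δ →
      ∀ (c : ℕ → X) (N : ℕ) (σ : ℝ → X),
      (∀ i < N, dist (c i) (c (i+1)) ≤ G) →
      (∀ i ≤ N, ∀ j ≤ N, |(i:ℝ) - (j:ℝ)| ≤ K' * dist (c i) (c j) + C') →
      GeodesicFrom σ (c 0) (c N) →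
      ∀ j ≤ N, ∃ s ∈ Icc 0 (dist (c 0) (c N)), dist (c j) (σ s) ≤ Db := by
  obtain ⟨Da, hDa0, hmorse⟩ := morse_a δ K' C' G hδ hK' hC' hG
  set W : ℝ := K' * (2*Da + 1) + C' with hW
  have hW0 : 0 ≤ W := by rw [hW]; nlinarith
  set Db : ℝ := G * W + Da with hDb
  have hDb0 : 0 ≤ Db := by rw [hDb]; nlinarith
  have hDaDb : Da ≤ Db := by rw [hDb]; nlinarith
  refine ⟨Db, hDb0, ?_⟩
  intro X _ hX hyp c N σ hgap hlow hσ j hjN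
  set L := dist (c 0) (c N) with hL
  have hL0 : 0 ≤ L := dist_nonneg
  have hmA := hmorse X hX hyp c N σ hgap hlow hσ
  classical
  set Pp : ℕ → Prop := fun i => i ≤ N ∧ ∃ s ∈ Icc 0 L, dist (c i) (σ s) ≤ Da with hPp
  have hPp0 : Pp 0 := by
    refine ⟨Nat.zero_le N, 0, left_mem_Icc.2 hL0, ?_⟩
    rw [hσ.2.1]; simp [hDa0]
  have hPpN : Pp N := by
    refine ⟨le_refl N, L, right_mem_Icc.2 hL0, ?_⟩
    rw [hσ.2.2]; simp [hDa0]
  by_cases hPj : Pp j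
  · obtain ⟨_, s, hs, hd⟩ := hPj
    exact ⟨s, hs, hd.trans hDaDb⟩
  set im := Nat.findGreatest Pp j with him
  have himle : im ≤ j := Nat.findGreatest_le j
  have hPim : Pp im := Nat.findGreatest_spec (Nat.zero_le j) hPp0
  have hexN : ∃ i, j ≤ i ∧ Pp i := ⟨N, hjN, hPpN⟩
  set ip := Nat.find hexN with hip
  have hfs := Nat.find_spec hexN
  have hjip : j ≤ ip := hfs.1
  have hPip : Pp ip := hfs.2
  have himj : im < j := lt_of_le_of_ne himle (fun h => hPj (h ▸ hPim))
  have hjip' : j < ip := by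
    rcases Nat.eq_or_lt_of_le hjip with h | h
    · exact absurd (h ▸ hPip) hPj
    · exact h
  have hnotmid : ∀ l, im < l → l < ip → ¬ Pp l := by
    intro l h1 h2 hPl
    rcases Nat.le_total l j with h | h
    · exact Nat.findGreatest_is_greatest h1 h hPl
    · exact Nat.find_min hexN h2 ⟨h, hPl⟩
  have himip : im < ip := lt_trans himj hjip'
  obtain ⟨himN, sm, hsm, hdsm⟩ := hPim
  obtain ⟨hipN, sp, hsp, hdsp⟩ := hPip
  -- samples along the geodesic between the two anchors
  set a := min sm sp with ha
  set b := max sm sp with hb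
  have hale : a ≤ b := min_le_max
  have ha0 : 0 ≤ a := le_min hsm.1 hsp.1
  have hbL : b ≤ L := max_le hsm.2 hsp.2
  set T := ⌈b - a⌉₊ with hT
  have hsampmem : ∀ t : ℕ, min (a + t) b ∈ Icc 0 L := by
    intro t
    exact ⟨le_min (add_nonneg ha0 (Nat.cast_nonneg t)) (ha0.trans hale),
      (min_le_right _ _).trans hbL⟩
  have hchoice : ∀ t : ℕ, ∃ i ≤ N, dist (σ (min (a + t) b)) (c i) ≤ Da :=
    fun t => hmA _ (hsampmem t)
  choose l hlN hld using hchoice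
  have hdich : ∀ t, l t ≤ im ∨ ip ≤ l t := by
    intro t
    by_contra h
    push_neg at h
    exact hnotmid (l t) (by omega) (by omega)
      ⟨hlN t, _, hsampmem t, by rw [dist_comm]; exact hld t⟩
  have hstep : ∀ t : ℕ, dist (σ (min (a + t) b)) (σ (min (a + (t+1:ℕ)) b)) ≤ 1 := by
    intro t
    rw [hσ.1 _ (hsampmem t) _ (hsampmem (t+1))]
    push_cast
    have h1 : min (a + (t:ℝ)) b ≤ min (a + ((t:ℝ)+1)) b := min_le_min (by linarith) le_rfl
    have h2 : min (a + ((t:ℝ)+1)) b ≤ min (a + (t:ℝ)) b + 1 := by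
      rcases le_total (a + ((t:ℝ)+1)) b with h | h
      · rw [min_eq_left h, min_eq_left (by linarith)]; linarith
      · rw [min_eq_right h]
        rcases le_total (a + (t:ℝ)) b with h' | h'
        · rw [min_eq_left h']; linarith
        · rw [min_eq_right h']; linarith
    rw [abs_le]
    constructor <;> linarith
  have hsat : ∀ t : ℕ, T + 1 ≤ t → min (a + t) b = b := by
    intro t ht
    have h1 : b - a ≤ (T:ℝ) := Nat.le_ceil _
    have h2 : (T:ℝ) + 1 ≤ t := by exact_mod_cast ht
    exact min_eq_right (by linarith)
  have hzero : min (a + (0:ℕ)) b = a := by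
    push_cast
    rw [add_zero]
    exact min_eq_left hale
  -- find an adjacent low/high pair
  obtain ⟨x, y, hxN, hyN, hxim, hipy, hxy⟩ : ∃ x y, x ≤ N ∧ y ≤ N ∧ x ≤ im ∧ ip ≤ y ∧
      dist (c x) (c y) ≤ 2*Da + 1 := by
    rcases le_total sm sp with hor | hor
    · have haa : a = sm := min_eq_left hor
      have hbb : b = sp := max_eq_right hor
      set lf : ℕ → ℕ := fun t => if t = 0 then im else if t ≤ T then l t else ip with hlf
      have hlfd : ∀ t : ℕ, dist (σ (min (a + t) b)) (c (lf t)) ≤ Da := by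
        intro t
        rw [hlf]; dsimp only
        split_ifs with h1 h2
        · subst h1; rw [hzero, haa, dist_comm]; exact hdsm
        · exact hld t
        · rw [hsat t (by omega), hbb, dist_comm]; exact hdsp
      have hlfN : ∀ t, lf t ≤ N := by
        intro t; rw [hlf]; dsimp only; split_ifs
        · exact himN
        · exact hlN t
        · exact hipN
      have hlfdich : ∀ t, lf t ≤ im ∨ ip ≤ lf t := by
        intro t; rw [hlf]; dsimp only; split_ifs
        · left; exact le_refl _
        · exact hdich t
        · right; exact le_refl _
      have hlf0 : lf 0 ≤ im := by rw [hlf]; simp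
      have hlfT : ¬ (lf (T+1) ≤ im) := by
        rw [hlf]; dsimp only
        rw [if_neg (by omega), if_neg (by omega)]
        omega
      obtain ⟨t, htT, hPt, hPt1⟩ := flip_lemma (fun t => lf t ≤ im) T hlf0 hlfT
      have hy : ip ≤ lf (t+1) := (hlfdich (t+1)).resolve_left hPt1
      refine ⟨lf t, lf (t+1), hlfN t, hlfN (t+1), hPt, hy, ?_⟩
      calc dist (c (lf t)) (c (lf (t+1))) ≤
          dist (c (lf t)) (σ (min (a + t) b)) + dist (σ (min (a + t) b)) (σ (min (a + (t+1:ℕ)) b))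
            + dist (σ (min (a + (t+1:ℕ)) b)) (c (lf (t+1))) := dist_triangle4 _ _ _ _
        _ ≤ 2*Da + 1 := by
            have e1 := hlfd t
            have e2 := hstep t
            have e3 := hlfd (t+1)
            rw [dist_comm] at e1
            linarith
    · have haa : a = sp := min_eq_right hor
      have hbb : b = sm := max_eq_left hor
      set lf : ℕ → ℕ := fun t => if t = 0 then ip else if t ≤ T then l t else im with hlf
      have hlfd : ∀ t : ℕ, dist (σ (min (a + t) b)) (c (lf t)) ≤ Da := by
        intro t
        rw [hlf]; dsimp only
        split_ifs with h1 h2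
        · subst h1; rw [hzero, haa, dist_comm]; exact hdsp
        · exact hld t
        · rw [hsat t (by omega), hbb, dist_comm]; exact hdsm
      have hlfN : ∀ t, lf t ≤ N := by
        intro t; rw [hlf]; dsimp only; split_ifs
        · exact hipN
        · exact hlN t
        · exact himN
      have hlfdich : ∀ t, lf t ≤ im ∨ ip ≤ lf t := by
        intro t; rw [hlf]; dsimp only; split_ifs
        · right; exact le_refl _
        · exact hdich t
        · left; exact le_refl _
      have hlf0 : ip ≤ lf 0 := by rw [hlf]; simp
      have hlfT : ¬ (ip ≤ lf (T+1)) := by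
        rw [hlf]; dsimp only
        rw [if_neg (by omega), if_neg (by omega)]
        omega
      obtain ⟨t, htT, hPt, hPt1⟩ := flip_lemma (fun t => ip ≤ lf t) T hlf0 hlfT
      have hy : lf (t+1) ≤ im := by
        rcases hlfdich (t+1) with h | h
        · exact h
        · exact absurd h hPt1
      refine ⟨lf (t+1), lf t, hlfN (t+1), hlfN t, hy, hPt, ?_⟩
      calc dist (c (lf (t+1))) (c (lf t)) ≤
          dist (c (lf (t+1))) (σ (min (a + (t+1:ℕ)) b)) + dist (σ (min (a + (t+1:ℕ)) b)) (σ (min (a + t) b))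
            + dist (σ (min (a + t) b)) (c (lf t)) := dist_triangle4 _ _ _ _
        _ ≤ 2*Da + 1 := by
            have e1 := hlfd (t+1)
            have e2 := hstep t
            have e3 := hlfd t
            rw [dist_comm] at e1
            rw [dist_comm] at e2
            linarith
  -- conclude
  have hlowxy := hlow x hxN y hyN
  have hWxy : |(x:ℝ) - y| ≤ W := by
    rw [hW]
    nlinarith [hlowxy]
  have hcast : (ip:ℝ) - im ≤ W := by
    have h1 : (x:ℝ) ≤ im := Nat.cast_le.2 hxim
    have h2 : (ip:ℝ) ≤ y := Nat.cast_le.2 hipy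
    have h3 := (abs_le.1 hWxy).1
    linarith
  have hjim : (j:ℝ) - im ≤ W := by
    have h1 : (j:ℝ) < ip := by exact_mod_cast hjip'
    linarith
  have hcd := chain_dist c G N hgap j hjN im (le_of_lt himj)
  refine ⟨sm, hsm, ?_⟩
  have htri : dist (c j) (σ sm) ≤ dist (c j) (c im) + dist (c im) (σ sm) := dist_triangle _ _ _
  have hcomm : dist (c j) (c im) = dist (c im) (c j) := dist_comm _ _
  have hmul : G * ((j:ℝ) - im) ≤ G * W := mul_le_mul_of_nonneg_left hjim (by linarith)
  rw [hDb]
  linarith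

lemma gdist_le {X Y : Type} [MetricSpace X] [MetricSpace Y] {f : X → Y} {g : Y → X} {K C : ℝ}
    (hK : 1 ≤ K) (hemb : QIEmb K C f) (hg : ∀ y, dist y (f (g y)) ≤ C) (y y' : Y) :
    dist (g y) (g y') ≤ K * dist y y' + 3*K*C := by
  have h1 := (hemb (g y) (g y')).1
  have h2 : dist (f (g y)) (f (g y')) ≤ dist y y' + 2*C := by
    have t1 := hg y
    have t2 := hg y'
    have t3 : dist (f (g y)) (f (g y')) ≤ dist (f (g y)) y + dist y y' + dist y' (f (g y')) :=
      dist_triangle4 _ _ _ _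
    have t4 : dist (f (g y)) y = dist y (f (g y)) := dist_comm _ _
    linarith
  have hKpos : (0:ℝ) < K := by linarith
  have h3 := mul_le_mul_of_nonneg_left h1 (le_of_lt hKpos)
  have h4 : K * ((1/K) * dist (g y) (g y') - C) = dist (g y) (g y') - K*C := by
    field_simp
  have h5 := mul_le_mul_of_nonneg_left h2 (le_of_lt hKpos)
  rw [h4] at h3
  nlinarith

lemma chain_props {X Y : Type} [MetricSpace X] [MetricSpace Y] {f : X → Y} {g : Y → X}
    {K C : ℝ} (hK : 1 ≤ K) (hC : 0 ≤ C) (hemb : QIEmb K C f)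
    (hg : ∀ y, dist y (f (g y)) ≤ C)
    {y y' : Y} {γ : ℝ → Y} (hγ : GeodesicFrom γ y y') (c : ℕ → X)
    (hc : ∀ i : ℕ, c i = g (γ (min (i:ℝ) (dist y y')))) :
    c 0 = g y ∧ c ⌈dist y y'⌉₊ = g y' ∧
    (∀ i < ⌈dist y y'⌉₊, dist (c i) (c (i+1)) ≤ K*(1+3*C)) ∧
    (∀ i ≤ ⌈dist y y'⌉₊, ∀ j ≤ ⌈dist y y'⌉₊,
      |(i:ℝ)-(j:ℝ)| ≤ K * dist (c i) (c j) + (3*C+1)) := by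
  set d := dist y y' with hd
  have hd0 : 0 ≤ d := dist_nonneg
  set N := ⌈d⌉₊ with hN
  have hmem : ∀ i : ℕ, min (i:ℝ) d ∈ Icc 0 d :=
    fun i => ⟨le_min (Nat.cast_nonneg i) hd0, min_le_right _ _⟩
  have hNd : d ≤ (N:ℝ) := Nat.le_ceil d
  have hNd2 : (N:ℝ) < d + 1 := Nat.ceil_lt_add_one hd0
  refine ⟨?_, ?_, ?_, ?_⟩
  · rw [hc 0]
    have : min ((0:ℕ):ℝ) d = 0 := by simp [hd0]
    rw [this, hγ.2.1]
  · rw [hc N]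
    have : min ((N:ℕ):ℝ) d = d := min_eq_right hNd
    rw [this, hγ.2.2]
  · intro i hi
    rw [hc i, hc (i+1)]
    have hdg : dist (γ (min (i:ℝ) d)) (γ (min ((i+1:ℕ):ℝ) d)) ≤ 1 := by
      rw [hγ.1 _ (hmem i) _ (hmem (i+1))]
      push_cast
      have h1 : min (i:ℝ) d ≤ min ((i:ℝ)+1) d := min_le_min (by linarith) le_rfl
      have h2 : min ((i:ℝ)+1) d ≤ min (i:ℝ) d + 1 := by
        rcases le_total ((i:ℝ)+1) d with h | h
        · rw [min_eq_left h, min_eq_left (by linarith)]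
        · rw [min_eq_right h]
          rcases le_total (i:ℝ) d with h' | h'
          · rw [min_eq_left h']; linarith
          · rw [min_eq_right h']; linarith
      rw [abs_le]
      constructor <;> linarith
    have := gdist_le hK hemb hg (γ (min (i:ℝ) d)) (γ (min ((i+1:ℕ):ℝ) d))
    have hKn : 0 ≤ K := by linarith
    nlinarith
  · -- lower bound
    have hmono : ∀ i j : ℕ, i ≤ j → j ≤ N → (j:ℝ) - i - 1 ≤ min (j:ℝ) d - min (i:ℝ) d := by
      intro i j hij hjN
      have hij' : (i:ℝ) ≤ j := Nat.cast_le.2 hij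
      have hjN' : (j:ℝ) ≤ N := Nat.cast_le.2 hjN
      rcases le_total (j:ℝ) d with h | h
      · rw [min_eq_left h, min_eq_left (by linarith)]; linarith
      · rw [min_eq_right h]
        rcases le_total (i:ℝ) d with h' | h'
        · rw [min_eq_left h']; linarith
        · rw [min_eq_right h']; linarith
    intro i hi j hj
    have habs : |(i:ℝ)-(j:ℝ)| ≤ |min (i:ℝ) d - min (j:ℝ) d| + 1 := by
      rcases Nat.le_total i j with h | h
      · have h1 := hmono i j h hj
        have h2 : min (i:ℝ) d ≤ min (j:ℝ) d := min_le_min (Nat.cast_le.2 h) le_rfl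
        have h3 : (i:ℝ) ≤ j := Nat.cast_le.2 h
        rw [abs_of_nonpos (by linarith), abs_of_nonpos (by linarith)]
        linarith
      · have h1 := hmono j i h hi
        have h2 : min (j:ℝ) d ≤ min (i:ℝ) d := min_le_min (Nat.cast_le.2 h) le_rfl
        have h3 : (j:ℝ) ≤ i := Nat.cast_le.2 h
        rw [abs_of_nonneg (by linarith), abs_of_nonneg (by linarith)]
        linarith
    have hiso : dist (γ (min (i:ℝ) d)) (γ (min (j:ℝ) d)) = |min (i:ℝ) d - min (j:ℝ) d| :=
      hγ.1 _ (hmem i) _ (hmem j)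
    have hup : dist (γ (min (i:ℝ) d)) (γ (min (j:ℝ) d)) ≤ K * dist (c i) (c j) + 3*C := by
      have t1 := hg (γ (min (i:ℝ) d))
      have t2 := hg (γ (min (j:ℝ) d))
      have t3 := (hemb (c i) (c j)).2
      have t4 : dist (γ (min (i:ℝ) d)) (γ (min (j:ℝ) d)) ≤
          dist (γ (min (i:ℝ) d)) (f (c i)) + dist (f (c i)) (f (c j))
            + dist (f (c j)) (γ (min (j:ℝ) d)) := dist_triangle4 _ _ _ _
      have t5 : dist (f (c j)) (γ (min (j:ℝ) d)) = dist (γ (min (j:ℝ) d)) (f (c j)) :=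
        dist_comm _ _
      rw [hc i, hc j] at t4 ⊢
      rw [hc i] at t3
      rw [hc j] at t3
      rw [hc j] at t5
      linarith
    rw [← hiso] at habs
    linarith

lemma main_side (δ K C : ℝ) (hδ : 0 ≤ δ) (hK : 1 ≤ K) (hC : 0 ≤ C) :
    ∃ δ' : ℝ, 0 ≤ δ' ∧ ∀ (X Y : Type) [MetricSpace X] [MetricSpace Y] (f : X → Y),
      GeodesicSpace X → GeodesicSpace Y → QI K C f → Hyperbolic X δ →
      ∀ (u v w : Y) (γ1 γ2 γ3 : ℝ → Y), GeodesicFrom γ1 u v → GeodesicFrom γ2 v w →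
        GeodesicFrom γ3 w u →
      ∀ p ∈ γ1 '' Icc (0:ℝ) (dist u v),
        ∃ q ∈ (γ2 '' Icc (0:ℝ) (dist v w)) ∪ (γ3 '' Icc (0:ℝ) (dist w u)),
          dist p q ≤ δ' := by
  set G : ℝ := K*(1+3*C) with hG
  have hG1 : 1 ≤ G := by rw [hG]; nlinarith
  set C' : ℝ := 3*C+1 with hC'
  have hC'0 : 0 ≤ C' := by rw [hC']; linarith
  have hK0 : 0 ≤ K := by linarith
  obtain ⟨Da, hDa0, hmA⟩ := morse_a δ K C' G hδ hK0 hC'0 hG1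
  obtain ⟨Db, hDb0, hmB⟩ := morse_b δ K C' G hδ hK0 hC'0 hG1
  set δ' : ℝ := 1 + 3*C + K*(Db + δ + Da) with hδ'
  have hδ'0 : 0 ≤ δ' := by rw [hδ']; nlinarith
  refine ⟨δ', hδ'0, ?_⟩
  intro X Y _ _ f hX hY hQI hypX u v w γ1 γ2 γ3 hγ1 hγ2 hγ3 p hp
  obtain ⟨hemb, hdense⟩ := hQI
  choose g hg using hdense
  -- chains
  set d1 := dist u v with hd1
  set d2 := dist v w with hd2
  set d3 := dist w u with hd3
  set N1 := ⌈d1⌉₊ with hN1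
  set N2 := ⌈d2⌉₊ with hN2
  set N3 := ⌈d3⌉₊ with hN3
  set c1 : ℕ → X := fun i => g (γ1 (min (i:ℝ) d1)) with hc1
  set c2 : ℕ → X := fun i => g (γ2 (min (i:ℝ) d2)) with hc2
  set c3 : ℕ → X := fun i => g (γ3 (min (i:ℝ) d3)) with hc3
  obtain ⟨hc10, hc1N, hc1gap, hc1low⟩ := chain_props hK hC hemb hg hγ1 c1 (fun i => rfl)
  obtain ⟨hc20, hc2N, hc2gap, hc2low⟩ := chain_props hK hC hemb hg hγ2 c2 (fun i => rfl)
  obtain ⟨hc30, hc3N, hc3gap, hc3low⟩ := chain_props hK hC hemb hg hγ3 c3 (fun i => rfl)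
  -- geodesics in X
  obtain ⟨σ1, hσ1⟩ := hX (g u) (g v)
  obtain ⟨σ2, hσ2⟩ := hX (g v) (g w)
  obtain ⟨σ3, hσ3⟩ := hX (g w) (g u)
  have hσ1' : GeodesicFrom σ1 (c1 0) (c1 N1) := by rw [hc10, hc1N]; exact hσ1
  have hσ2' : GeodesicFrom σ2 (c2 0) (c2 N2) := by rw [hc20, hc2N]; exact hσ2
  have hσ3' : GeodesicFrom σ3 (c3 0) (c3 N3) := by rw [hc30, hc3N]; exact hσ3
  set T : GeoTriangle X := ⟨g u, g v, g w, σ1, σ2, σ3, hσ1, hσ2, hσ3⟩ with hT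
  have hside0 : T.side 0 = σ1 '' Icc 0 (dist (g u) (g v)) := rfl
  have hside1 : T.side 1 = σ2 '' Icc 0 (dist (g v) (g w)) := rfl
  have hside2 : T.side 2 = σ3 '' Icc 0 (dist (g w) (g u)) := rfl
  -- locate p
  obtain ⟨t, ht, rfl⟩ := hp
  set i₀ := ⌊t⌋₊ with hi₀
  have hi₀N : i₀ ≤ N1 := le_trans (Nat.floor_le_floor ht.2) (Nat.floor_le_ceil d1)
  have hmin : min ((i₀:ℕ):ℝ) d1 = (i₀:ℝ) := min_eq_left (le_trans (Nat.floor_le ht.1) ht.2)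
  have hti : dist (γ1 t) (γ1 (min ((i₀:ℕ):ℝ) d1)) ≤ 1 := by
    have hm : min ((i₀:ℕ):ℝ) d1 ∈ Icc 0 d1 :=
      ⟨le_min (Nat.cast_nonneg _) (dist_nonneg), min_le_right _ _⟩
    rw [hγ1.1 t ht _ hm, hmin]
    have h1 : (i₀:ℝ) ≤ t := Nat.floor_le ht.1
    have h2 : t < (i₀:ℝ) + 1 := Nat.lt_floor_add_one t
    rw [abs_of_nonneg (by linarith)]
    linarith
  -- step 1: chain point near geodesic side 1
  obtain ⟨s1, hs1mem, hs1d⟩ := hmB X hX hypX c1 N1 σ1 hc1gap hc1low hσ1' i₀ hi₀N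
  -- step 2: thinness in X
  have hmem1 : σ1 s1 ∈ T.side 0 := by
    rw [hside0]
    refine ⟨s1, ?_, rfl⟩
    rw [hc10, hc1N] at hs1mem
    exact hs1mem
  obtain ⟨q', hq'mem, hq'd⟩ := hypX T 0 (σ1 s1) hmem1
  have e1 : (0+1 : Fin 3) = 1 := rfl
  have e2 : (0+2 : Fin 3) = 2 := rfl
  rw [e1, e2, hside1, hside2] at hq'mem
  -- common distance estimate
  have hkey : ∀ (z : Y) (x : X), dist q' x ≤ Da → dist z (f x) ≤ C →
      dist (γ1 t) z ≤ δ' := by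
    intro z x hqx hzf
    have h1 : dist (c1 i₀) x ≤ Db + δ + Da := by
      calc dist (c1 i₀) x ≤ dist (c1 i₀) (σ1 s1) + dist (σ1 s1) q' + dist q' x :=
            dist_triangle4 _ _ _ _
        _ ≤ Db + δ + Da := by linarith
    have h2 : dist (f (c1 i₀)) (f x) ≤ K * (Db + δ + Da) + C := by
      have := (hemb (c1 i₀) x).2
      nlinarith
    have h3 : dist (γ1 (min ((i₀:ℕ):ℝ) d1)) (f (c1 i₀)) ≤ C := hg _
    have h4 : dist (γ1 t) z ≤ dist (γ1 t) (γ1 (min ((i₀:ℕ):ℝ) d1))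
        + dist (γ1 (min ((i₀:ℕ):ℝ) d1)) (f (c1 i₀)) + dist (f (c1 i₀)) (f x)
        + dist (f x) z := by
      have a1 := dist_triangle4 (γ1 t) (γ1 (min ((i₀:ℕ):ℝ) d1)) (f (c1 i₀)) (f x)
      have a2 := dist_triangle (γ1 t) (f x) z
      linarith
    have h5 : dist (f x) z = dist z (f x) := dist_comm _ _
    rw [hδ']
    linarith
  cases hq'mem with
  | inl h =>
    obtain ⟨s2, hs2mem, rfl⟩ := h
    have hs2mem' : s2 ∈ Icc 0 (dist (c2 0) (c2 N2)) := by
      rw [hc20, hc2N]; exact hs2mem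
    obtain ⟨i2, hi2N, hi2d⟩ := hmA X hX hypX c2 N2 σ2 hc2gap hc2low hσ2' s2 hs2mem'
    refine ⟨γ2 (min ((i2:ℕ):ℝ) d2), Or.inl ⟨min ((i2:ℕ):ℝ) d2,
      ⟨le_min (Nat.cast_nonneg _) dist_nonneg, min_le_right _ _⟩, rfl⟩, ?_⟩
    apply hkey _ (c2 i2) hi2d
    exact hg _
  | inr h =>
    obtain ⟨s3, hs3mem, rfl⟩ := h
    have hs3mem' : s3 ∈ Icc 0 (dist (c3 0) (c3 N3)) := by
      rw [hc30, hc3N]; exact hs3mem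
    obtain ⟨i3, hi3N, hi3d⟩ := hmA X hX hypX c3 N3 σ3 hc3gap hc3low hσ3' s3 hs3mem'
    refine ⟨γ3 (min ((i3:ℕ):ℝ) d3), Or.inr ⟨min ((i3:ℕ):ℝ) d3,
      ⟨le_min (Nat.cast_nonneg _) dist_nonneg, min_le_right _ _⟩, rfl⟩, ?_⟩
    apply hkey _ (c3 i3) hi3d
    exact hg _

theorem hyperbolicity_quasiIsometry_invariant (δ K C : ℝ) (hδ : 0 ≤ δ) :
    ∃ δ' : ℝ, 0 ≤ δ' ∧
      ∀ (X Y : Type) [MetricSpace X] [MetricSpace Y] (f : X → Y),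
        GeodesicSpace X → GeodesicSpace Y → QI K C f →
        Hyperbolic X δ → Hyperbolic Y δ' := by
  set K₁ := max K 1 with hK₁def
  set C₁ := max C 0 with hC₁def
  have hK₁ : 1 ≤ K₁ := le_max_right _ _
  have hC₁ : 0 ≤ C₁ := le_max_right _ _
  obtain ⟨δm, hδm0, Hmain⟩ := main_side δ K₁ C₁ hδ hK₁ hC₁
  refine ⟨max (3*C₁) δm, le_trans (by linarith) (le_max_left _ _), ?_⟩
  intro X Y _ _ f hX hY hQI hypX
  intro T i p hp
  by_cases hKpos : 0 < K
  · have hQI' : QI K₁ C₁ f := by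
      obtain ⟨hemb, hdense⟩ := hQI
      refine ⟨fun x z => ?_, fun y => (hdense y).imp (fun x h => h.trans (le_max_left C 0))⟩
      obtain ⟨h1, h2⟩ := hemb x z
      have hd0 : 0 ≤ dist x z := dist_nonneg
      have hCle : C ≤ C₁ := le_max_left C 0
      constructor
      · have ha : 1/K₁ ≤ 1/K := one_div_le_one_div_of_le hKpos (le_max_left K 1)
        have hb : (1/K₁) * dist x z ≤ (1/K) * dist x z := mul_le_mul_of_nonneg_right ha hd0
        linarith
      · have hKle : K ≤ K₁ := le_max_left K 1
        have hb : K * dist x z ≤ K₁ * dist x z := mul_le_mul_of_nonneg_right hKle hd0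
        linarith
    have H := Hmain X Y f hX hY hQI' hypX
    fin_cases i
    · obtain ⟨q, hqmem, hqd⟩ := H T.a T.b T.c T.s1 T.s2 T.s3 T.h1 T.h2 T.h3 p hp
      exact ⟨q, hqmem, hqd.trans (le_max_right _ _)⟩
    · obtain ⟨q, hqmem, hqd⟩ := H T.b T.c T.a T.s2 T.s3 T.s1 T.h2 T.h3 T.h1 p hp
      exact ⟨q, hqmem, hqd.trans (le_max_right _ _)⟩
    · obtain ⟨q, hqmem, hqd⟩ := H T.c T.a T.b T.s3 T.s1 T.s2 T.h3 T.h1 T.h2 p hp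
      exact ⟨q, hqmem, hqd.trans (le_max_right _ _)⟩
  · obtain ⟨hemb, hdense⟩ := hQI
    have hbound : ∀ y y' : Y, dist y y' ≤ 3*C₁ := by
      intro y y'
      obtain ⟨x, hx⟩ := hdense y
      obtain ⟨x', hx'⟩ := hdense y'
      have h2 := (hemb x x').2
      have hKd : K * dist x x' ≤ 0 :=
        mul_nonpos_of_nonpos_of_nonneg (by linarith) dist_nonneg
      have hCle : C ≤ C₁ := le_max_left C 0
      have t4 : dist y y' ≤ dist y (f x) + dist (f x) (f x') + dist (f x') y' :=
        dist_triangle4 _ _ _ _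
      have t5 : dist (f x') y' = dist y' (f x') := dist_comm _ _
      linarith
    have hside : ∃ q, q ∈ T.side (i+1) := by
      have : ∀ j : Fin 3, ∃ q, q ∈ T.side j := by
        intro j
        fin_cases j
        · exact ⟨T.s1 0, 0, ⟨le_refl 0, dist_nonneg⟩, rfl⟩
        · exact ⟨T.s2 0, 0, ⟨le_refl 0, dist_nonneg⟩, rfl⟩
        · exact ⟨T.s3 0, 0, ⟨le_refl 0, dist_nonneg⟩, rfl⟩
      exact this (i+1)
    obtain ⟨q, hq⟩ := hside
    exact ⟨q, Set.mem_union_left _ hq, (hbound p q).trans (le_max_left _ _)⟩
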